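/- Conversely, the choice γ_t = μ_t σ_{t-Δt}²/(μ_{t-Δt} σ_t) in the DDIM family yields a forward conditional p(x_t | x_{t-Δt}, x_0) = N((μ_t/μ_{t-Δt}) x_{t-Δt}, (σ_t² - (μ_t²/μ_{t-Δt}²) σ_{t-Δt}²) I), which does not depend on x_0. -/

import Mathlib

open Real

/-- One-dimensional Gaussian probability density with mean `m` and variance `v`. -/
noncomputable def gpdf (m v x : ℝ) : ℝ :=
  (Real.sqrt (2 * π * v))⁻¹ * Real.exp (-(x - m) ^ 2 / (2 * v))

lemma gpdf_mul_eq {m1 v1 x m2 v2 y m3 v3 m4 v4 : ℝ}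
    (h1 : 0 < v1) (h2 : 0 < v2) (h3 : 0 < v3) (h4 : 0 < v4)
    (hv : v1 * v2 = v3 * v4)
    (he : (x - m1) ^ 2 / (2 * v1) + (y - m2) ^ 2 / (2 * v2)
        = (y - m3) ^ 2 / (2 * v3) + (x - m4) ^ 2 / (2 * v4)) :
    gpdf m1 v1 x * gpdf m2 v2 y = gpdf m3 v3 y * gpdf m4 v4 x := by
  unfold gpdf
  have hX : 2 * π * v1 * (2 * π * v2) = 2 * π * v3 * (2 * π * v4) := by
    linear_combination 4 * π ^ 2 * hv
  have ha : -(x - m1) ^ 2 / (2 * v1) + -(y - m2) ^ 2 / (2 * v2)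
      = -(y - m3) ^ 2 / (2 * v3) + -(x - m4) ^ 2 / (2 * v4) := by
    linear_combination -he
  conv_lhs => rw [mul_mul_mul_comm, ← mul_inv, ← Real.sqrt_mul (by positivity), ← Real.exp_add,
    hX, ha]
  conv_rhs => rw [mul_mul_mul_comm, ← mul_inv, ← Real.sqrt_mul (by positivity), ← Real.exp_add]

/-- Conversely, the choice `γ = μ_t σ_{t-Δt}²/(μ_{t-Δt} σ_t)` in the DDIM family
(`λ² = σ_{t-Δt}² - γ²`) yields a forward conditional
`p(x_t | x_{t-Δt}, x_0) = N((μ_t/μ_{t-Δt}) x_{t-Δt}, σ_t² - (μ_t²/μ_{t-Δt}²) σ_{t-Δt}²)`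
that does not depend on `x_0`; this is expressed by the Bayes factorization identity
`p(x_{t-Δt}|x_t,x_0) p(x_t|x_0) = p(x_t|x_{t-Δt}) p(x_{t-Δt}|x_0)`.
Here `μs, σs` denote `μ_{t-Δt}, σ_{t-Δt}`, and `σ_t² μ_{t-Δt}² > μ_t² σ_{t-Δt}²`. -/
theorem ddpm_gamma_gives_markov_forward
    (μs μt σs σt : ℝ)
    (hμs : 0 < μs) (hμt : 0 < μt) (hσs : 0 < σs) (hσt : 0 < σt)
    (hsnr : μt ^ 2 * σs ^ 2 < σt ^ 2 * μs ^ 2)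
    (γ : ℝ) (hγ : γ = μt * σs ^ 2 / (μs * σt)) :
    ∀ x0 xs xt : ℝ,
      gpdf (μs * x0 + γ * (xt - μt * x0) / σt) (σs ^ 2 - γ ^ 2) xs
          * gpdf (μt * x0) (σt ^ 2) xt
        = gpdf (μt / μs * xs) (σt ^ 2 - μt ^ 2 / μs ^ 2 * σs ^ 2) xt
          * gpdf (μs * x0) (σs ^ 2) xs := by
  intro x0 xs xt
  have hμs' : μs ≠ 0 := ne_of_gt hμs
  have hσt' : σt ≠ 0 := ne_of_gt hσt
  have hv1 : 0 < σs ^ 2 - γ ^ 2 := by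
    subst hγ
    rw [div_pow, sub_pos, div_lt_iff₀ (by positivity)]
    nlinarith [mul_lt_mul_of_pos_left hsnr (pow_pos hσs 2)]
  have hv3 : 0 < σt ^ 2 - μt ^ 2 / μs ^ 2 * σs ^ 2 := by
    rw [sub_pos, div_mul_eq_mul_div, div_lt_iff₀ (by positivity)]
    linarith
  have hv1' : σs ^ 2 - γ ^ 2 ≠ 0 := ne_of_gt hv1
  have hv3' : σt ^ 2 - μt ^ 2 / μs ^ 2 * σs ^ 2 ≠ 0 := ne_of_gt hv3
  subst hγ
  set D := σt ^ 2 * μs ^ 2 - μt ^ 2 * σs ^ 2 with hD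
  have hDpos : 0 < D := by simp only [hD]; linarith
  have e1 : σs ^ 2 - (μt * σs ^ 2 / (μs * σt)) ^ 2 = σs ^ 2 * D / (μs ^ 2 * σt ^ 2) := by
    field_simp; ring
  have e3 : σt ^ 2 - μt ^ 2 / μs ^ 2 * σs ^ 2 = D / μs ^ 2 := by
    field_simp
    exact hD.symm
  refine gpdf_mul_eq hv1 (by positivity) hv3 (by positivity) ?_ ?_
  · rw [e1, e3]; field_simp
  · rw [e1, e3]; field_simp; ring
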